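/- arXiv:2602.06686 — 2 statements merged into one kernel-verified Lean document; each statement's English description precedes it below -/
import Mathlib

section
/- (Third-order equivalence on D2Q9.) Let f ∈ ℝ⁹ satisfy the momentum constraints Σᵢ e_{ix} fᵢ = 0 and Σᵢ e_{iy} fᵢ = 0, and let f⁻ᵢ = (fᵢ - f_ī)/2 be its antisymmetric part. Define A_{αβγ} = Σᵢ H⁽³⁾ᵢ,αβγ fᵢ. Then for every i, wᵢ (H⁽³⁾ᵢ,αβγ A_{αβγ})/(6c_s⁶) (summation over all ordered triples α,β,γ ∈ {x,y}) equals f⁻ᵢ. -/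
open Finset

/-- x-components of the D2Q9 velocities. -/
noncomputable def ex (c : ℝ) : Fin 9 → ℝ := ![0, c, 0, -c, 0, c, -c, -c, c]

/-- y-components of the D2Q9 velocities. -/
noncomputable def ey (c : ℝ) : Fin 9 → ℝ := ![0, 0, c, 0, -c, c, c, -c, -c]

/-- D2Q9 velocity components indexed by coordinate `α ∈ {x, y}`. -/
noncomputable def ev (c : ℝ) : Fin 2 → Fin 9 → ℝ := ![ex c, ey c]

/-- D2Q9 weights. -/
noncomputable def w9 : Fin 9 → ℝ := ![4/9, 1/9, 1/9, 1/9, 1/9, 1/36, 1/36, 1/36, 1/36]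

/-- Velocity inversion on D2Q9 indices: `e (bar9 i) = - e i`. -/
def bar9 : Fin 9 → Fin 9 := ![0, 3, 4, 1, 2, 7, 8, 5, 6]

/-- Squared sound speed. -/
noncomputable def cs2 (c : ℝ) : ℝ := c ^ 2 / 3

/-- Second-order Hermite polynomials `H⁽²⁾ᵢ,αβ = e_{iα} e_{iβ} - c_s² δ_{αβ}`. -/
noncomputable def H2 (c : ℝ) (α β : Fin 2) (i : Fin 9) : ℝ :=
  ev c α i * ev c β i - cs2 c * (if α = β then 1 else 0)

/-- Third-order Hermite polynomials. -/
noncomputable def H3 (c : ℝ) (α β γ : Fin 2) (i : Fin 9) : ℝ :=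
  ev c α i * ev c β i * ev c γ i -
    cs2 c * (ev c α i * (if β = γ then 1 else 0) + ev c β i * (if γ = α then 1 else 0) +
      ev c γ i * (if α = β then 1 else 0))

/-- The D2Q9 ghost mode `φᵢ = (e_{ix}² - c_s²)(e_{iy}² - c_s²)`. -/
noncomputable def ghost (c : ℝ) (i : Fin 9) : ℝ :=
  (ex c i ^ 2 - cs2 c) * (ey c i ^ 2 - cs2 c)

/-- The symmetric subspace of `ℝ⁹` under velocity inversion. -/
def S9 : Submodule ℝ (Fin 9 → ℝ) where
  carrier := {f | ∀ i, f (bar9 i) = f i}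
  add_mem' := by intro a b ha hb i; simp [ha i, hb i]
  zero_mem' := by intro i; simp
  smul_mem' := by intro r a ha i; simp [ha i]

/-- The antisymmetric subspace of `ℝ⁹` under velocity inversion. -/
def A9 : Submodule ℝ (Fin 9 → ℝ) where
  carrier := {f | ∀ i, f (bar9 i) = -f i}
  add_mem' := by intro a b ha hb i; simp [ha i, hb i]; ring
  zero_mem' := by intro i; simp
  smul_mem' := by intro r a ha i; simp [ha i]

/-- Expansion of a sum over `Fin 9`. -/
theorem sum_univ_nine' {M : Type*} [AddCommMonoid M] (g : Fin 9 → M) :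
    ∑ i, g i = g 0 + g 1 + g 2 + g 3 + g 4 + g 5 + g 6 + g 7 + g 8 := by
  rw [Fin.sum_univ_castSucc, Fin.sum_univ_eight]
  rfl

/-- **Third-order equivalence on D2Q9.** For `f` satisfying the momentum
constraints, the third-order Hermite projection equals the antisymmetric part of `f`. -/

theorem d2q9_third_order_equivalence (c : ℝ) (hc : 0 < c) (f : Fin 9 → ℝ)
    (hmom : ∀ α : Fin 2, ∑ i, ev c α i * f i = 0) :
    ∀ i : Fin 9,
      w9 i * (∑ α : Fin 2, ∑ β : Fin 2, ∑ γ : Fin 2,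
          H3 c α β γ i * (∑ j, H3 c α β γ j * f j)) / (6 * (cs2 c) ^ 3)
        = (f i - f (bar9 i)) / 2 := by
  intro i
  have ex0 : ex c 0 = 0 := rfl
  have ey0 : ey c 0 = 0 := rfl
  have w_0 : w9 0 = (4/9 : ℝ) := rfl
  have b_0 : bar9 0 = 0 := rfl
  have ex1 : ex c 1 = c := rfl
  have ey1 : ey c 1 = 0 := rfl
  have w_1 : w9 1 = (1/9 : ℝ) := rfl
  have b_1 : bar9 1 = 3 := rfl
  have ex2 : ex c 2 = 0 := rfl
  have ey2 : ey c 2 = c := rfl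
  have w_2 : w9 2 = (1/9 : ℝ) := rfl
  have b_2 : bar9 2 = 4 := rfl
  have ex3 : ex c 3 = -c := rfl
  have ey3 : ey c 3 = 0 := rfl
  have w_3 : w9 3 = (1/9 : ℝ) := rfl
  have b_3 : bar9 3 = 1 := rfl
  have ex4 : ex c 4 = 0 := rfl
  have ey4 : ey c 4 = -c := rfl
  have w_4 : w9 4 = (1/9 : ℝ) := rfl
  have b_4 : bar9 4 = 2 := rfl
  have ex5 : ex c 5 = c := rfl
  have ey5 : ey c 5 = c := rfl
  have w_5 : w9 5 = (1/36 : ℝ) := rfl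
  have b_5 : bar9 5 = 7 := rfl
  have ex6 : ex c 6 = -c := rfl
  have ey6 : ey c 6 = c := rfl
  have w_6 : w9 6 = (1/36 : ℝ) := rfl
  have b_6 : bar9 6 = 8 := rfl
  have ex7 : ex c 7 = -c := rfl
  have ey7 : ey c 7 = -c := rfl
  have w_7 : w9 7 = (1/36 : ℝ) := rfl
  have b_7 : bar9 7 = 5 := rfl
  have ex8 : ex c 8 = c := rfl
  have ey8 : ey c 8 = -c := rfl
  have w_8 : w9 8 = (1/36 : ℝ) := rfl
  have b_8 : bar9 8 = 6 := rfl
  have hx : c * (f 1 - f 3 + f 5 - f 6 - f 7 + f 8) = 0 := by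
    have h := hmom 0
    rw [sum_univ_nine'] at h
    simp only [ev, Matrix.cons_val_zero, Matrix.cons_val_one, Matrix.head_cons,
      ex0, ex1, ex2, ex3, ex4, ex5, ex6, ex7, ex8, ey0, ey1, ey2, ey3, ey4, ey5, ey6, ey7, ey8] at h
    linear_combination h
  have hy : c * (f 2 - f 4 + f 5 + f 6 - f 7 - f 8) = 0 := by
    have h := hmom 1
    rw [sum_univ_nine'] at h
    simp only [ev, Matrix.cons_val_zero, Matrix.cons_val_one, Matrix.head_cons,
      ex0, ex1, ex2, ex3, ex4, ex5, ex6, ex7, ex8, ey0, ey1, ey2, ey3, ey4, ey5, ey6, ey7, ey8] at h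
    linear_combination h
  have m000 : ∀ j, H3 c 0 0 0 j = ex c j ^ 3 - 3 * cs2 c * ex c j := by
    intro j
    simp only [H3, ev, Matrix.cons_val_zero, Matrix.cons_val_one, Matrix.head_cons]
    norm_num
    ring
  have m111 : ∀ j, H3 c 1 1 1 j = ey c j ^ 3 - 3 * cs2 c * ey c j := by
    intro j
    simp only [H3, ev, Matrix.cons_val_zero, Matrix.cons_val_one, Matrix.head_cons]
    norm_num
    ring
  have m001 : ∀ j, H3 c 0 0 1 j = (ex c j ^ 2 - cs2 c) * ey c j := by
    intro j
    simp only [H3, ev, Matrix.cons_val_zero, Matrix.cons_val_one, Matrix.head_cons]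
    norm_num
    ring
  have m010 : ∀ j, H3 c 0 1 0 j = (ex c j ^ 2 - cs2 c) * ey c j := by
    intro j
    simp only [H3, ev, Matrix.cons_val_zero, Matrix.cons_val_one, Matrix.head_cons]
    norm_num
    ring
  have m100 : ∀ j, H3 c 1 0 0 j = (ex c j ^ 2 - cs2 c) * ey c j := by
    intro j
    simp only [H3, ev, Matrix.cons_val_zero, Matrix.cons_val_one, Matrix.head_cons]
    norm_num
    ring
  have m011 : ∀ j, H3 c 0 1 1 j = (ey c j ^ 2 - cs2 c) * ex c j := by
    intro j
    simp only [H3, ev, Matrix.cons_val_zero, Matrix.cons_val_one, Matrix.head_cons]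
    norm_num
    ring
  have m101 : ∀ j, H3 c 1 0 1 j = (ey c j ^ 2 - cs2 c) * ex c j := by
    intro j
    simp only [H3, ev, Matrix.cons_val_zero, Matrix.cons_val_one, Matrix.head_cons]
    norm_num
    ring
  have m110 : ∀ j, H3 c 1 1 0 j = (ey c j ^ 2 - cs2 c) * ex c j := by
    intro j
    simp only [H3, ev, Matrix.cons_val_zero, Matrix.cons_val_one, Matrix.head_cons]
    norm_num
    ring
  have hexval : ∀ j, ex c j = 0 ∨ ex c j = c ∨ ex c j = -c := by
    intro j
    fin_cases j <;>
      first
        | exact Or.inl rfl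
        | exact Or.inr (Or.inl rfl)
        | exact Or.inr (Or.inr rfl)
  have heyval : ∀ j, ey c j = 0 ∨ ey c j = c ∨ ey c j = -c := by
    intro j
    fin_cases j <;>
      first
        | exact Or.inl rfl
        | exact Or.inr (Or.inl rfl)
        | exact Or.inr (Or.inr rfl)
  have hx000 : ∀ j, ex c j ^ 3 - 3 * cs2 c * ex c j = 0 := by
    intro j
    rcases hexval j with h | h | h <;> rw [h, cs2] <;> ring
  have hy000 : ∀ j, ey c j ^ 3 - 3 * cs2 c * ey c j = 0 := by
    intro j
    rcases heyval j with h | h | h <;> rw [h, cs2] <;> ring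
  have hA1 : ∑ j, (ex c j ^ 2 - cs2 c) * ey c j * f j = c ^ 3 * (f 5 + f 6 - f 7 - f 8) := by
    rw [sum_univ_nine']
    simp only [cs2, ex0, ex1, ex2, ex3, ex4, ex5, ex6, ex7, ex8, ey0, ey1, ey2, ey3, ey4, ey5, ey6, ey7, ey8]
    linear_combination (-(c ^ 2) / 3) * hy
  have hA2 : ∑ j, (ey c j ^ 2 - cs2 c) * ex c j * f j = c ^ 3 * (f 5 - f 6 - f 7 + f 8) := by
    rw [sum_univ_nine']
    simp only [cs2, ex0, ex1, ex2, ex3, ex4, ex5, ex6, ex7, ex8, ey0, ey1, ey2, ey3, ey4, ey5, ey6, ey7, ey8]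
    linear_combination (-(c ^ 2) / 3) * hx
  have hsum : (∑ α : Fin 2, ∑ β : Fin 2, ∑ γ : Fin 2,
      H3 c α β γ i * (∑ j, H3 c α β γ j * f j))
      = 3 * ((ex c i ^ 2 - cs2 c) * ey c i) * (c ^ 3 * (f 5 + f 6 - f 7 - f 8))
        + 3 * ((ey c i ^ 2 - cs2 c) * ex c i) * (c ^ 3 * (f 5 - f 6 - f 7 + f 8)) := by
    simp only [Fin.sum_univ_two, m000, m111, m001, m010, m100, m011, m101, m110,
      hx000, hy000, zero_mul, mul_zero, Finset.sum_const_zero, add_zero, zero_add,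
      hA1, hA2]
    ring
  rw [hsum]
  have hc0 : c ≠ 0 := ne_of_gt hc
  have h6x : c ^ 6 * f 1 - c ^ 6 * f 3 + c ^ 6 * f 5 - c ^ 6 * f 6 - c ^ 6 * f 7 + c ^ 6 * f 8
      = 0 := by linear_combination (c ^ 5) * hx
  have h6y : c ^ 6 * f 2 - c ^ 6 * f 4 + c ^ 6 * f 5 + c ^ 6 * f 6 - c ^ 6 * f 7 - c ^ 6 * f 8
      = 0 := by linear_combination (c ^ 5) * hy
  fin_cases i <;>
    simp [cs2, ex0, ey0, w_0, b_0, ex1, ey1, w_1, b_1, ex2, ey2, w_2, b_2, ex3, ey3, w_3, b_3, ex4, ey4, w_4, b_4, ex5, ey5, w_5, b_5, ex6, ey6, w_6, b_6, ex7, ey7, w_7, b_7, ex8, ey8, w_8, b_8] <;>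
    field_simp <;>
    first
      | ring1
      | linarith [h6x, h6y, mul_left_cancel₀ hc0 (hx.trans (mul_zero c).symm), mul_left_cancel₀ hc0 (hy.trans (mul_zero c).symm)]
end

section
/- (Third-order equivalence with forcing.) Under the hypotheses of the third-order equivalence on D2Q9, but with the modified momentum constraint Σᵢ e_{iα} fᵢ = -(Δt/2) F_α for α ∈ {x,y}, the Hermite projection wᵢ H⁽³⁾ᵢ,αβγ A_{αβγ}/(6c_s⁶) equals f⁻ᵢ + (Δt/2) (wᵢ e_{iα} F_α)/c_s² (summation over α). -/
open Finset

lemma exE0 (c : ℝ) : ex c 0 = 0 := rfl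
lemma eyE0 (c : ℝ) : ey c 0 = 0 := rfl
lemma barE0 : bar9 0 = 0 := rfl
lemma w9E0 : w9 0 = 4/9 := rfl
lemma exE1 (c : ℝ) : ex c 1 = c := rfl
lemma eyE1 (c : ℝ) : ey c 1 = 0 := rfl
lemma barE1 : bar9 1 = 3 := rfl
lemma w9E1 : w9 1 = 1/9 := rfl
lemma exE2 (c : ℝ) : ex c 2 = 0 := rfl
lemma eyE2 (c : ℝ) : ey c 2 = c := rfl
lemma barE2 : bar9 2 = 4 := rfl
lemma w9E2 : w9 2 = 1/9 := rfl
lemma exE3 (c : ℝ) : ex c 3 = -c := rfl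
lemma eyE3 (c : ℝ) : ey c 3 = 0 := rfl
lemma barE3 : bar9 3 = 1 := rfl
lemma w9E3 : w9 3 = 1/9 := rfl
lemma exE4 (c : ℝ) : ex c 4 = 0 := rfl
lemma eyE4 (c : ℝ) : ey c 4 = -c := rfl
lemma barE4 : bar9 4 = 2 := rfl
lemma w9E4 : w9 4 = 1/9 := rfl
lemma exE5 (c : ℝ) : ex c 5 = c := rfl
lemma eyE5 (c : ℝ) : ey c 5 = c := rfl
lemma barE5 : bar9 5 = 7 := rfl
lemma w9E5 : w9 5 = 1/36 := rfl
lemma exE6 (c : ℝ) : ex c 6 = -c := rfl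
lemma eyE6 (c : ℝ) : ey c 6 = c := rfl
lemma barE6 : bar9 6 = 8 := rfl
lemma w9E6 : w9 6 = 1/36 := rfl
lemma exE7 (c : ℝ) : ex c 7 = -c := rfl
lemma eyE7 (c : ℝ) : ey c 7 = -c := rfl
lemma barE7 : bar9 7 = 5 := rfl
lemma w9E7 : w9 7 = 1/36 := rfl
lemma exE8 (c : ℝ) : ex c 8 = c := rfl
lemma eyE8 (c : ℝ) : ey c 8 = -c := rfl
lemma barE8 : bar9 8 = 6 := rfl
lemma w9E8 : w9 8 = 1/36 := rfl
lemma evE0 (c : ℝ) : ev c 0 = ex c := rfl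
lemma evE1 (c : ℝ) : ev c 1 = ey c := rfl

lemma mkE0 (h : 0 < 9) : (⟨0, h⟩ : Fin 9) = (0 : Fin 9) := rfl
lemma mkE1 (h : 1 < 9) : (⟨1, h⟩ : Fin 9) = (1 : Fin 9) := rfl
lemma mkE2 (h : 2 < 9) : (⟨2, h⟩ : Fin 9) = (2 : Fin 9) := rfl
lemma mkE3 (h : 3 < 9) : (⟨3, h⟩ : Fin 9) = (3 : Fin 9) := rfl
lemma mkE4 (h : 4 < 9) : (⟨4, h⟩ : Fin 9) = (4 : Fin 9) := rfl
lemma mkE5 (h : 5 < 9) : (⟨5, h⟩ : Fin 9) = (5 : Fin 9) := rfl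
lemma mkE6 (h : 6 < 9) : (⟨6, h⟩ : Fin 9) = (6 : Fin 9) := rfl
lemma mkE7 (h : 7 < 9) : (⟨7, h⟩ : Fin 9) = (7 : Fin 9) := rfl
lemma mkE8 (h : 8 < 9) : (⟨8, h⟩ : Fin 9) = (8 : Fin 9) := rfl

lemma sum9 (g : Fin 9 → ℝ) :
    ∑ j, g j = g 0 + (g 1 + g 2 + g 3 + g 4 + g 5 + g 6 + g 7 + g 8) := by
  rw [Fin.sum_univ_succ, Fin.sum_univ_eight]; rfl

set_option maxHeartbeats 2000000 in
/-- **Third-order equivalence with forcing on D2Q9.** Under the modified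
momentum constraint `Σᵢ e_{iα} fᵢ = -(Δt/2) F_α`, the third-order Hermite projection
equals `f⁻ᵢ + (Δt/2) wᵢ (Σ_α e_{iα} F_α) / c_s²`. -/
theorem d2q9_third_order_equivalence_forcing (c : ℝ) (hc : 0 < c) (f : Fin 9 → ℝ)
    (Δt : ℝ) (hΔt : 0 < Δt) (F : Fin 2 → ℝ)
    (hmom : ∀ α : Fin 2, ∑ i, ev c α i * f i = -(Δt / 2) * F α) :
    ∀ i : Fin 9,
      w9 i * (∑ α : Fin 2, ∑ β : Fin 2, ∑ γ : Fin 2,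
          H3 c α β γ i * (∑ j, H3 c α β γ j * f j)) / (6 * (cs2 c) ^ 3)
        = (f i - f (bar9 i)) / 2 +
            Δt / 2 * (w9 i * (∑ α : Fin 2, ev c α i * F α) / cs2 c) := by
  have hΔt' : Δt ≠ 0 := ne_of_gt hΔt
  have hc' : c ≠ 0 := ne_of_gt hc
  have hF : ∀ α, F α = -(2 / Δt) * ∑ i, ev c α i * f i := by
    intro α
    have h := hmom α
    field_simp at h ⊢
    linarith
  have h000 : ∑ j, H3 c 0 0 0 j * f j = 0 := by
    rw [sum9]; simp [H3, evE0, evE1, cs2, exE0, eyE0, barE0, w9E0, exE1, eyE1, barE1, w9E1, exE2, eyE2, barE2, w9E2, exE3, eyE3, barE3, w9E3, exE4, eyE4, barE4, w9E4, exE5, eyE5, barE5, w9E5, exE6, eyE6, barE6, w9E6, exE7, eyE7, barE7, w9E7, exE8, eyE8, barE8, w9E8, evE0, evE1]; ring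
  have h111 : ∑ j, H3 c 1 1 1 j * f j = 0 := by
    rw [sum9]; simp [H3, evE0, evE1, cs2, exE0, eyE0, barE0, w9E0, exE1, eyE1, barE1, w9E1, exE2, eyE2, barE2, w9E2, exE3, eyE3, barE3, w9E3, exE4, eyE4, barE4, w9E4, exE5, eyE5, barE5, w9E5, exE6, eyE6, barE6, w9E6, exE7, eyE7, barE7, w9E7, exE8, eyE8, barE8, w9E8, evE0, evE1]; ring
  have h001 : ∑ j, H3 c 0 0 1 j * f j =
      -(c^3/3) * (f 2 - f 4) + (2*c^3/3) * (f 5 + f 6 - f 7 - f 8) := by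
    rw [sum9]; simp [H3, evE0, evE1, cs2, exE0, eyE0, barE0, w9E0, exE1, eyE1, barE1, w9E1, exE2, eyE2, barE2, w9E2, exE3, eyE3, barE3, w9E3, exE4, eyE4, barE4, w9E4, exE5, eyE5, barE5, w9E5, exE6, eyE6, barE6, w9E6, exE7, eyE7, barE7, w9E7, exE8, eyE8, barE8, w9E8, evE0, evE1]; ring
  have h010 : ∑ j, H3 c 0 1 0 j * f j =
      -(c^3/3) * (f 2 - f 4) + (2*c^3/3) * (f 5 + f 6 - f 7 - f 8) := by
    rw [sum9]; simp [H3, evE0, evE1, cs2, exE0, eyE0, barE0, w9E0, exE1, eyE1, barE1, w9E1, exE2, eyE2, barE2, w9E2, exE3, eyE3, barE3, w9E3, exE4, eyE4, barE4, w9E4, exE5, eyE5, barE5, w9E5, exE6, eyE6, barE6, w9E6, exE7, eyE7, barE7, w9E7, exE8, eyE8, barE8, w9E8, evE0, evE1]; ring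
  have h100 : ∑ j, H3 c 1 0 0 j * f j =
      -(c^3/3) * (f 2 - f 4) + (2*c^3/3) * (f 5 + f 6 - f 7 - f 8) := by
    rw [sum9]; simp [H3, evE0, evE1, cs2, exE0, eyE0, barE0, w9E0, exE1, eyE1, barE1, w9E1, exE2, eyE2, barE2, w9E2, exE3, eyE3, barE3, w9E3, exE4, eyE4, barE4, w9E4, exE5, eyE5, barE5, w9E5, exE6, eyE6, barE6, w9E6, exE7, eyE7, barE7, w9E7, exE8, eyE8, barE8, w9E8, evE0, evE1]; ring
  have h011 : ∑ j, H3 c 0 1 1 j * f j =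
      -(c^3/3) * (f 1 - f 3) + (2*c^3/3) * (f 5 - f 6 - f 7 + f 8) := by
    rw [sum9]; simp [H3, evE0, evE1, cs2, exE0, eyE0, barE0, w9E0, exE1, eyE1, barE1, w9E1, exE2, eyE2, barE2, w9E2, exE3, eyE3, barE3, w9E3, exE4, eyE4, barE4, w9E4, exE5, eyE5, barE5, w9E5, exE6, eyE6, barE6, w9E6, exE7, eyE7, barE7, w9E7, exE8, eyE8, barE8, w9E8, evE0, evE1]; ring
  have h101 : ∑ j, H3 c 1 0 1 j * f j =
      -(c^3/3) * (f 1 - f 3) + (2*c^3/3) * (f 5 - f 6 - f 7 + f 8) := by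
    rw [sum9]; simp [H3, evE0, evE1, cs2, exE0, eyE0, barE0, w9E0, exE1, eyE1, barE1, w9E1, exE2, eyE2, barE2, w9E2, exE3, eyE3, barE3, w9E3, exE4, eyE4, barE4, w9E4, exE5, eyE5, barE5, w9E5, exE6, eyE6, barE6, w9E6, exE7, eyE7, barE7, w9E7, exE8, eyE8, barE8, w9E8, evE0, evE1]; ring
  have h110 : ∑ j, H3 c 1 1 0 j * f j =
      -(c^3/3) * (f 1 - f 3) + (2*c^3/3) * (f 5 - f 6 - f 7 + f 8) := by
    rw [sum9]; simp [H3, evE0, evE1, cs2, exE0, eyE0, barE0, w9E0, exE1, eyE1, barE1, w9E1, exE2, eyE2, barE2, w9E2, exE3, eyE3, barE3, w9E3, exE4, eyE4, barE4, w9E4, exE5, eyE5, barE5, w9E5, exE6, eyE6, barE6, w9E6, exE7, eyE7, barE7, w9E7, exE8, eyE8, barE8, w9E8, evE0, evE1]; ring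
  have hRHS : ∀ i : Fin 9, Δt / 2 * (w9 i * (∑ α : Fin 2, ev c α i * F α) / cs2 c)
      = -(w9 i * ((ev c 0 i) * (∑ j, ev c 0 j * f j) + (ev c 1 i) * (∑ j, ev c 1 j * f j))
          / cs2 c) := by
    intro i
    rw [Fin.sum_univ_two, hF 0, hF 1, cs2]
    field_simp
    ring
  intro i
  rw [hRHS]
  fin_cases i <;>
  · simp only [mkE0, mkE1, mkE2, mkE3, mkE4, mkE5, mkE6, mkE7, mkE8]
    simp only [Fin.sum_univ_two, h000, h001, h010, h011, h100, h101, h110, h111, sum9]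
    simp only [H3, evE0, evE1, cs2, exE0, eyE0, barE0, w9E0, exE1, eyE1, barE1, w9E1, exE2, eyE2, barE2, w9E2, exE3, eyE3, barE3, w9E3, exE4, eyE4, barE4, w9E4, exE5, eyE5, barE5, w9E5, exE6, eyE6, barE6, w9E6, exE7, eyE7, barE7, w9E7, exE8, eyE8, barE8, w9E8, evE0, evE1, mul_zero, zero_mul, mul_one, one_mul,
      if_true, if_false, reduceIte, zero_ne_one, one_ne_zero, add_zero, zero_add, neg_neg, mul_neg, neg_mul]
    field_simp
    try ring
end
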